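/- Let N, N' be positive integers and k, k' nonnegative integers. Let a_0 ≤ … ≤ a_N, a'_0 ≤ … ≤ a'_{N'}, d_1 ≤ … ≤ d_k, d'_1 ≤ … ≤ d'_{k'} be positive integers such that a_i ≠ d_j for all i, j and a'_{i'} ≠ d'_{j'} for all i', j'. Suppose that the equality (∏_{j=1}^k (1 - t^{d_j})) / (∏_{i=0}^N (1 - t^{a_i})) = (∏_{j'=1}^{k'} (1 - t^{d'_{j'}})) / (∏_{i'=0}^{N'} (1 - t^{a'_{i'}})) holds as rational functions in the variable t. Then N = N', k = k', a_i = a'_i for every 0 ≤ i ≤ N, and d_j = d'_j for every 1 ≤ j ≤ k. -/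

import Mathlib

open Polynomial

noncomputable def PP (M : Multiset ℕ) : ℚ[X] := (M.map (fun e => 1 - X ^ e)).prod

lemma one_sub_X_pow_ne (e : ℕ) (he : 0 < e) : (1 - X ^ e : ℚ[X]) ≠ 0 := by
  intro h
  have := congrArg (fun p => Polynomial.coeff p e) h
  simp [coeff_one, he.ne', he.ne'.symm] at this

lemma PP_coeff_zero (M : Multiset ℕ) (h : ∀ e ∈ M, 0 < e) : (PP M).coeff 0 = 1 := by
  induction M using Multiset.induction with
  | empty => simp [PP]
  | cons e M ih =>
      have he : 0 < e := h e (Multiset.mem_cons_self e M)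
      rw [PP, Multiset.map_cons, Multiset.prod_cons, Polynomial.mul_coeff_zero]
      have : (PP M).coeff 0 = 1 := ih (fun x hx => h x (Multiset.mem_cons_of_mem hx))
      rw [PP] at this
      simp [this, coeff_one, he.ne', he.ne'.symm]

lemma PP_coeff_min (M : Multiset ℕ) (j : ℕ) (hj : 0 < j) (h : ∀ e ∈ M, 0 < e)
    (hle : ∀ e ∈ M, j ≤ e) : (PP M).coeff j = -(M.count j : ℚ) := by
  induction M using Multiset.induction with
  | empty => simp [PP, coeff_one, hj.ne']
  | cons e M ih =>
      have he : 0 < e := h e (Multiset.mem_cons_self e M)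
      have hje : j ≤ e := hle e (Multiset.mem_cons_self e M)
      have h' : ∀ x ∈ M, 0 < x := fun x hx => h x (Multiset.mem_cons_of_mem hx)
      have hle' : ∀ x ∈ M, j ≤ x := fun x hx => hle x (Multiset.mem_cons_of_mem hx)
      have step : ((1 - X ^ e) * (PP M)).coeff j
          = (PP M).coeff j - if e ≤ j then (PP M).coeff (j - e) else 0 := by
        rw [sub_mul, one_mul, coeff_sub, (commute_X_pow (PP M) e).eq, coeff_mul_X_pow']
      rw [PP, Multiset.map_cons, Multiset.prod_cons, ← PP, step]
      by_cases hej : e = j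
      · subst hej
        rw [if_pos le_rfl]
        simp only [Nat.sub_self]
        rw [PP_coeff_zero M h', ih h' hle', Multiset.count_cons_self]
        push_cast; ring
      · have : ¬ e ≤ j := fun hh => hej (le_antisymm hh hje)
        rw [if_neg this, sub_zero, ih h' hle', Multiset.count_cons_of_ne (by omega)]

lemma PP_inj (M : Multiset ℕ) : ∀ M', (∀ e ∈ M, 0 < e) → (∀ e ∈ M', 0 < e) →
    PP M = PP M' → M = M' := by
  induction M using Multiset.strongInductionOn with
  | ih M IH =>
    intro M' hM hM' heq
    by_cases h0 : M + M' = 0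
    · have h1 : M = 0 := by
        have := congrArg Multiset.card h0
        simp at this
        exact this.1
      have h2 : M' = 0 := by
        have := congrArg Multiset.card h0
        simp at this
        exact this.2
      rw [h1, h2]
    · have hne : (M + M').toFinset.Nonempty := by
        rw [Multiset.toFinset_nonempty]
        exact fun h => h0 (by simpa using h)
      set m := (M + M').toFinset.min' hne with hm
      have hmmem : m ∈ M + M' := by
        have := (M + M').toFinset.min'_mem hne
        rwa [Multiset.mem_toFinset] at this
      have hmin : ∀ e ∈ M + M', m ≤ e := fun e he =>
        (M + M').toFinset.min'_le e (Multiset.mem_toFinset.mpr he)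
      have hmpos : 0 < m := by
        rcases Multiset.mem_add.mp hmmem with h | h
        exacts [hM m h, hM' m h]
      have hc : (PP M).coeff m = (PP M').coeff m := by rw [heq]
      rw [PP_coeff_min M m hmpos hM (fun e he => hmin e (Multiset.mem_add.mpr (Or.inl he))),
        PP_coeff_min M' m hmpos hM' (fun e he => hmin e (Multiset.mem_add.mpr (Or.inr he)))] at hc
      have hcount : M.count m = M'.count m := by
        have := neg_injective hc
        exact_mod_cast this
      have hmM : m ∈ M ∧ m ∈ M' := by
        rcases Multiset.mem_add.mp hmmem with h | h
        · refine ⟨h, ?_⟩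
          rw [← Multiset.count_pos, ← hcount, Multiset.count_pos]; exact h
        · refine ⟨?_, h⟩
          rw [← Multiset.count_pos, hcount, Multiset.count_pos]; exact h
      have hMe : M = m ::ₘ M.erase m := (Multiset.cons_erase hmM.1).symm
      have hM'e : M' = m ::ₘ M'.erase m := (Multiset.cons_erase hmM.2).symm
      have hPP : PP M = (1 - X ^ m) * PP (M.erase m) := by
        conv_lhs => rw [hMe]
        rw [PP, PP, Multiset.map_cons, Multiset.prod_cons]
      have hPP' : PP M' = (1 - X ^ m) * PP (M'.erase m) := by
        conv_lhs => rw [hM'e]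
        rw [PP, PP, Multiset.map_cons, Multiset.prod_cons]
      rw [hPP, hPP'] at heq
      have heq2 : PP (M.erase m) = PP (M'.erase m) :=
        mul_left_cancel₀ (one_sub_X_pow_ne m hmpos) heq
      have herased : M.erase m = M'.erase m :=
        IH (M.erase m) (Multiset.erase_lt.mpr hmM.1) (M'.erase m)
          (fun e he => hM e (Multiset.mem_of_mem_erase he))
          (fun e he => hM' e (Multiset.mem_of_mem_erase he)) heq2
      rw [hMe, hM'e, herased]

lemma PP_ne_zero (M : Multiset ℕ) (h : ∀ e ∈ M, 0 < e) : PP M ≠ 0 := by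
  rw [PP]
  apply Multiset.prod_ne_zero
  intro h0
  obtain ⟨e, he, he0⟩ := Multiset.mem_map.mp h0
  exact one_sub_X_pow_ne e (h e he) he0

lemma count_lemma (cd ca cd' ca' : ℕ) (h : cd + ca' = cd' + ca)
    (h1 : 0 < cd → ca = 0) (h2 : 0 < cd' → ca' = 0) : cd = cd' ∧ ca = ca' := by
  rcases Nat.eq_zero_or_pos cd with h3 | h3
  · rcases Nat.eq_zero_or_pos cd' with h4 | h4
    · omega
    · have := h2 h4; omega
  · have := h1 h3
    rcases Nat.eq_zero_or_pos cd' with h4 | h4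
    · omega
    · have := h2 h4; omega

lemma multiset_cancel (A D A' D' : Multiset ℕ)
    (h : D + A' = D' + A) (hDA : ∀ v ∈ D, v ∉ A) (hD'A' : ∀ v ∈ D', v ∉ A') :
    D = D' ∧ A = A' := by
  have key : ∀ v : ℕ, D.count v = D'.count v ∧ A.count v = A'.count v := by
    intro v
    have hc := congrArg (Multiset.count v) h
    simp only [Multiset.count_add] at hc
    have h1 : 0 < D.count v → A.count v = 0 := fun hv =>
      Multiset.count_eq_zero.mpr (hDA v (Multiset.count_pos.mp hv))
    have h2 : 0 < D'.count v → A'.count v = 0 := fun hv =>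
      Multiset.count_eq_zero.mpr (hD'A' v (Multiset.count_pos.mp hv))
    exact count_lemma _ _ _ _ hc h1 h2
  exact ⟨Multiset.ext.mpr fun v => (key v).1, Multiset.ext.mpr fun v => (key v).2⟩

lemma prodPP (n : ℕ) (g : ℕ → ℕ) :
    ∏ i ∈ Finset.range n, ((1 : ℚ[X]) - X ^ g i) = PP ((Multiset.range n).map g) := by
  rw [Finset.prod_eq_multiset_prod, PP, Multiset.map_map]
  rfl

lemma ratfunc_prod (n : ℕ) (g : ℕ → ℕ) :
    ∏ i ∈ Finset.range n, (1 - (RatFunc.X : RatFunc ℚ) ^ g i)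
    = algebraMap ℚ[X] (RatFunc ℚ) (∏ i ∈ Finset.range n, (1 - X ^ g i)) := by
  rw [map_prod]
  refine Finset.prod_congr rfl fun i _ => ?_
  rw [map_sub, map_one, map_pow, RatFunc.algebraMap_X]

lemma icc_prod {M : Type*} [CommMonoid M] (k : ℕ) (f : ℕ → M) :
    ∏ j ∈ Finset.Icc 1 k, f j = ∏ j ∈ Finset.range k, f (j + 1) := by
  induction k with
  | zero => simp
  | succ n ih => rw [Finset.prod_Icc_succ_top (by omega), ih, Finset.prod_range_succ]

lemma sorted_eq (n : ℕ) (f g : ℕ → ℕ) (hf : ∀ i j, i ≤ j → j < n → f i ≤ f j)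
    (hg : ∀ i j, i ≤ j → j < n → g i ≤ g j)
    (h : (Multiset.range n).map f = (Multiset.range n).map g) :
    ∀ i < n, f i = g i := by
  have hco : ((List.range n).map f : Multiset ℕ) = ((List.range n).map g : Multiset ℕ) := by
    rw [← Multiset.map_coe, ← Multiset.map_coe, Multiset.coe_range]; exact h
  have hperm := Multiset.coe_eq_coe.mp hco
  have hs1 : List.Pairwise (· ≤ ·) ((List.range n).map f) := by
    rw [List.pairwise_map]
    exact (List.pairwise_lt_range (n := n)).imp_of_mem
      (fun ha hb hlt => hf _ _ (le_of_lt hlt) (List.mem_range.mp hb))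
  have hs2 : List.Pairwise (· ≤ ·) ((List.range n).map g) := by
    rw [List.pairwise_map]
    exact (List.pairwise_lt_range (n := n)).imp_of_mem
      (fun ha hb hlt => hg _ _ (le_of_lt hlt) (List.mem_range.mp hb))
  have heql := List.Perm.eq_of_pairwise' hs1 hs2 hperm
  intro i hi
  have h1 : ((List.range n).map f)[i]'(by simpa using hi)
      = ((List.range n).map g)[i]'(by simpa using hi) := by simp only [heql]
  simpa using h1

lemma PP_add (M M' : Multiset ℕ) : PP (M + M') = PP M * PP M' := by
  rw [PP, PP, PP, Multiset.map_add, Multiset.prod_add]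


/-- Uniqueness of weight/degree data from equality of Poincaré series as rational
functions (Lemma on ratios of products of `1 - t^e`). -/
theorem stmt_0 (N N' k k' : ℕ) (hN : 0 < N) (hN' : 0 < N')
    (a a' d d' : ℕ → ℕ)
    (hapos : ∀ i ≤ N, 0 < a i) (ha'pos : ∀ i ≤ N', 0 < a' i)
    (hdpos : ∀ j, 1 ≤ j → j ≤ k → 0 < d j) (hd'pos : ∀ j, 1 ≤ j → j ≤ k' → 0 < d' j)
    (hamono : ∀ i j, i ≤ j → j ≤ N → a i ≤ a j)
    (ha'mono : ∀ i j, i ≤ j → j ≤ N' → a' i ≤ a' j)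
    (hdmono : ∀ i j, 1 ≤ i → i ≤ j → j ≤ k → d i ≤ d j)
    (hd'mono : ∀ i j, 1 ≤ i → i ≤ j → j ≤ k' → d' i ≤ d' j)
    (had : ∀ i ≤ N, ∀ j, 1 ≤ j → j ≤ k → a i ≠ d j)
    (ha'd' : ∀ i ≤ N', ∀ j, 1 ≤ j → j ≤ k' → a' i ≠ d' j)
    (heq :
      (∏ j ∈ Finset.Icc 1 k, (1 - (RatFunc.X : RatFunc ℚ) ^ d j)) /
          (∏ i ∈ Finset.range (N + 1), (1 - (RatFunc.X : RatFunc ℚ) ^ a i)) =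
      (∏ j ∈ Finset.Icc 1 k', (1 - (RatFunc.X : RatFunc ℚ) ^ d' j)) /
          (∏ i ∈ Finset.range (N' + 1), (1 - (RatFunc.X : RatFunc ℚ) ^ a' i))) :
    N = N' ∧ k = k' ∧ (∀ i ≤ N, a i = a' i) ∧ (∀ j, 1 ≤ j → j ≤ k → d j = d' j) := by
  set MA := (Multiset.range (N + 1)).map a with hMA
  set MA' := (Multiset.range (N' + 1)).map a' with hMA'
  set MD := (Multiset.range k).map (fun j => d (j + 1)) with hMDdef
  set MD' := (Multiset.range k').map (fun j => d' (j + 1)) with hMD'def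
  have hposA : ∀ e ∈ MA, 0 < e := by
    intro e he
    obtain ⟨i, hi, rfl⟩ := Multiset.mem_map.mp he
    exact hapos i (by have := Multiset.mem_range.mp hi; omega)
  have hposA' : ∀ e ∈ MA', 0 < e := by
    intro e he
    obtain ⟨i, hi, rfl⟩ := Multiset.mem_map.mp he
    exact ha'pos i (by have := Multiset.mem_range.mp hi; omega)
  have hposD : ∀ e ∈ MD, 0 < e := by
    intro e he
    obtain ⟨j, hj, rfl⟩ := Multiset.mem_map.mp he
    exact hdpos (j + 1) (by omega) (by have := Multiset.mem_range.mp hj; omega)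
  have hposD' : ∀ e ∈ MD', 0 < e := by
    intro e he
    obtain ⟨j, hj, rfl⟩ := Multiset.mem_map.mp he
    exact hd'pos (j + 1) (by omega) (by have := Multiset.mem_range.mp hj; omega)
  rw [icc_prod k (fun j => 1 - (RatFunc.X : RatFunc ℚ) ^ d j),
    icc_prod k' (fun j => 1 - (RatFunc.X : RatFunc ℚ) ^ d' j),
    ratfunc_prod k (fun j => d (j + 1)), ratfunc_prod k' (fun j => d' (j + 1)),
    ratfunc_prod (N + 1) a, ratfunc_prod (N' + 1) a'] at heq
  have hA0 : algebraMap ℚ[X] (RatFunc ℚ)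
      (∏ i ∈ Finset.range (N + 1), ((1 : ℚ[X]) - X ^ a i)) ≠ 0 := by
    apply RatFunc.algebraMap_ne_zero
    rw [prodPP]
    exact PP_ne_zero _ hposA
  have hA'0 : algebraMap ℚ[X] (RatFunc ℚ)
      (∏ i ∈ Finset.range (N' + 1), ((1 : ℚ[X]) - X ^ a' i)) ≠ 0 := by
    apply RatFunc.algebraMap_ne_zero
    rw [prodPP]
    exact PP_ne_zero _ hposA'
  rw [div_eq_div_iff hA0 hA'0, ← map_mul, ← map_mul] at heq
  have hpoly := RatFunc.algebraMap_injective ℚ heq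
  rw [prodPP k (fun j => d (j + 1)), prodPP k' (fun j => d' (j + 1)),
    prodPP (N + 1) a, prodPP (N' + 1) a', ← PP_add, ← PP_add] at hpoly
  have hmult : MD + MA' = MD' + MA := by
    apply PP_inj
    · intro e he
      rcases Multiset.mem_add.mp he with h | h
      exacts [hposD e h, hposA' e h]
    · intro e he
      rcases Multiset.mem_add.mp he with h | h
      exacts [hposD' e h, hposA e h]
    · exact hpoly
  have hDA : ∀ v ∈ MD, v ∉ MA := by
    intro v hv hva
    obtain ⟨j, hj, hjv⟩ := Multiset.mem_map.mp hv
    obtain ⟨i, hi, hiv⟩ := Multiset.mem_map.mp hva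
    exact had i (by have := Multiset.mem_range.mp hi; omega) (j + 1) (by omega)
      (by have := Multiset.mem_range.mp hj; omega) (by rw [hiv, hjv])
  have hD'A' : ∀ v ∈ MD', v ∉ MA' := by
    intro v hv hva
    obtain ⟨j, hj, hjv⟩ := Multiset.mem_map.mp hv
    obtain ⟨i, hi, hiv⟩ := Multiset.mem_map.mp hva
    exact ha'd' i (by have := Multiset.mem_range.mp hi; omega) (j + 1) (by omega)
      (by have := Multiset.mem_range.mp hj; omega) (by rw [hiv, hjv])
  obtain ⟨hDeq, hAeq⟩ := multiset_cancel MA MD MA' MD' hmult hDA hD'A'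
  have hNN : N = N' := by
    have := congrArg Multiset.card hAeq
    simp [hMA, hMA'] at this
    omega
  have hkk : k = k' := by
    have := congrArg Multiset.card hDeq
    simp [hMDdef, hMD'def] at this
    omega
  subst hNN; subst hkk
  refine ⟨rfl, rfl, ?_, ?_⟩
  · have := sorted_eq (N + 1) a a'
      (fun i j hij hj => hamono i j hij (by omega))
      (fun i j hij hj => ha'mono i j hij (by omega))
      (by rw [← hMA, ← hMA']; exact hAeq)
    intro i hi
    exact this i (by omega)
  · have := sorted_eq k (fun j => d (j + 1)) (fun j => d' (j + 1))
      (fun i j hij hj => hdmono (i + 1) (j + 1) (by omega) (by omega) (by omega))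
      (fun i j hij hj => hd'mono (i + 1) (j + 1) (by omega) (by omega) (by omega))
      (by rw [← hMDdef, ← hMD'def]; exact hDeq)
    intro j hj1 hjk
    have h2 : d (j - 1 + 1) = d' (j - 1 + 1) := this (j - 1) (by omega)
    rw [show j - 1 + 1 = j by omega] at h2
    exact h2
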